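/- Let p ≥ 2 and define Φ : ℝ → ℝ by Φ(t) = p·t for |t| ≤ 1 and Φ(t) = p·|t|^{p-2}t for |t| > 1. Then for all real t, |1+t|^p - 1 - |t|^p ≥ Φ(t). -/

import Mathlib

open Real

private lemma mono_aux {f f' : ℝ → ℝ} (hf : ∀ x, HasDerivAt f (f' x) x)
    {s : Set ℝ} (hs : Convex ℝ s) (hpos : ∀ x ∈ s, 0 ≤ f' x) : MonotoneOn f s := by
  apply monotoneOn_of_deriv_nonneg hs
  · exact fun x _ => (hf x).continuousAt.continuousWithinAt
  · exact fun x _ => (hf x).differentiableAt.differentiableWithinAt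
  · intro x hx
    rw [(hf x).deriv]
    exact hpos x (interior_subset hx)

private lemma superadd {a b q : ℝ} (ha : 0 ≤ a) (hb : 0 ≤ b) (hq : 1 ≤ q) :
    a ^ q + b ^ q ≤ (a + b) ^ q := by
  have key := NNReal.add_rpow_le_rpow_add a.toNNReal b.toNNReal hq
  have h := NNReal.coe_le_coe.2 key
  rwa [NNReal.coe_rpow, NNReal.coe_add, NNReal.coe_rpow, NNReal.coe_rpow, NNReal.coe_add,
    Real.coe_toNNReal a ha, Real.coe_toNNReal b hb] at h

private lemma rpow_le_self' {b q : ℝ} (hb0 : 0 ≤ b) (hb1 : b ≤ 1) (hq : 1 ≤ q) : b ^ q ≤ b := by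
  rcases eq_or_lt_of_le hb0 with h | h
  · rw [← h, Real.zero_rpow (by linarith : q ≠ 0)]
  · have := Real.rpow_le_rpow_of_exponent_ge h hb1 hq
    rwa [Real.rpow_one] at this

private lemma tangent_up {x q : ℝ} (hx : 1 ≤ x) (hq : 1 ≤ q) :
    x ^ q + q * x ^ (q - 1) ≤ (1 + x) ^ q := by
  have hx0 : (0:ℝ) < x := lt_of_lt_of_le one_pos hx
  have h1 : -1 ≤ 1 / x := by
    have : (0:ℝ) ≤ 1 / x := by positivity
    linarith
  have hber : 1 + q * (1 / x) ≤ (1 + 1 / x) ^ q := one_add_mul_self_le_rpow_one_add h1 hq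
  have hsplit : (1 + x) ^ q = x ^ q * (1 + 1 / x) ^ q := by
    rw [← Real.mul_rpow hx0.le (by positivity)]
    congr 1
    field_simp
    ring
  rw [hsplit]
  have hxq : (0:ℝ) < x ^ q := Real.rpow_pos_of_pos hx0 q
  have h2 : x ^ q * (1 + q * (1 / x)) ≤ x ^ q * (1 + 1 / x) ^ q :=
    mul_le_mul_of_nonneg_left hber hxq.le
  have h3 : x ^ q * (1 + q * (1 / x)) = x ^ q + q * x ^ (q - 1) := by
    rw [Real.rpow_sub_one hx0.ne' q]
    field_simp
  linarith [h2, h3.symm.le]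

private lemma tangent_down {x q : ℝ} (hx : 1 ≤ x) (hq : 1 ≤ q) :
    x ^ q - q * x ^ (q - 1) ≤ (x - 1) ^ q := by
  have hx0 : (0:ℝ) < x := lt_of_lt_of_le one_pos hx
  have h1 : -1 ≤ -(1 / x) := by
    have : 1 / x ≤ 1 := by rw [div_le_one hx0]; exact hx
    linarith
  have hber : 1 + q * (-(1 / x)) ≤ (1 + -(1 / x)) ^ q := one_add_mul_self_le_rpow_one_add h1 hq
  have h1x : (0:ℝ) ≤ 1 + -(1 / x) := by
    have : 1 / x ≤ 1 := by rw [div_le_one hx0]; exact hx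
    linarith
  have hsplit : (x - 1) ^ q = x ^ q * (1 + -(1 / x)) ^ q := by
    rw [← Real.mul_rpow hx0.le h1x]
    congr 1
    field_simp
    ring
  rw [hsplit]
  have hxq : (0:ℝ) < x ^ q := Real.rpow_pos_of_pos hx0 q
  have h2 : x ^ q * (1 + q * (-(1 / x))) ≤ x ^ q * (1 + -(1 / x)) ^ q :=
    mul_le_mul_of_nonneg_left hber hxq.le
  have h3 : x ^ q * (1 + q * (-(1 / x))) = x ^ q - q * x ^ (q - 1) := by
    rw [Real.rpow_sub_one hx0.ne' q]
    field_simp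
    ring
  linarith [h2, h3.symm.le]

private lemma caseA {p t : ℝ} (hp : 2 ≤ p) (ht : 0 ≤ t) :
    1 + p * t + t ^ p ≤ (1 + t) ^ p := by
  have hp1 : (1:ℝ) ≤ p := by linarith
  have hq1 : (1:ℝ) ≤ p - 1 := by linarith
  have hp0 : (0:ℝ) ≤ p := by linarith
  have hder : ∀ x : ℝ, HasDerivAt (fun x => (1 + x) ^ p - p * x - x ^ p)
      (1 * p * (1 + x) ^ (p - 1) - p - p * x ^ (p - 1)) x := by
    intro x
    have h1 : HasDerivAt (fun x : ℝ => (1 + x) ^ p) (1 * p * (1 + x) ^ (p - 1)) x :=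
      ((hasDerivAt_id x).const_add 1).rpow_const (Or.inr hp1)
    have h2 : HasDerivAt (fun x : ℝ => x ^ p) (p * x ^ (p - 1)) x :=
      Real.hasDerivAt_rpow_const (Or.inr hp1)
    have h3 : HasDerivAt (fun x : ℝ => p * x) p x := by
      simpa using (hasDerivAt_id x).const_mul p
    exact (h1.sub h3).sub h2
  have hmono : MonotoneOn (fun x => (1 + x) ^ p - p * x - x ^ p) (Set.Ici (0:ℝ)) := by
    refine mono_aux hder (convex_Ici 0) ?_
    intro x hx
    have hx0 : (0:ℝ) ≤ x := hx
    have hs : 1 ^ (p-1) + x ^ (p-1) ≤ (1 + x) ^ (p-1) := superadd zero_le_one hx0 hq1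
    rw [Real.one_rpow] at hs
    nlinarith [mul_le_mul_of_nonneg_left hs hp0]
  have := hmono (Set.self_mem_Ici) (ht : t ∈ Set.Ici (0:ℝ)) ht
  simp only [add_zero, mul_zero, Real.one_rpow,
    Real.zero_rpow (by linarith : p ≠ 0)] at this
  linarith

private lemma caseB {p t : ℝ} (hp : 2 ≤ p) (ht : 1 ≤ t) :
    1 + p * t ^ (p - 1) + t ^ p ≤ (1 + t) ^ p := by
  have hp1 : (1:ℝ) ≤ p := by linarith
  have hq1 : (1:ℝ) ≤ p - 1 := by linarith
  have hp0 : (0:ℝ) ≤ p := by linarith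
  have hder : ∀ x : ℝ, HasDerivAt (fun x => (1 + x) ^ p - x ^ p - p * x ^ (p - 1))
      (1 * p * (1 + x) ^ (p - 1) - p * x ^ (p - 1) - p * ((p - 1) * x ^ (p - 1 - 1))) x := by
    intro x
    have h1 : HasDerivAt (fun x : ℝ => (1 + x) ^ p) (1 * p * (1 + x) ^ (p - 1)) x :=
      ((hasDerivAt_id x).const_add 1).rpow_const (Or.inr hp1)
    have h2 : HasDerivAt (fun x : ℝ => x ^ p) (p * x ^ (p - 1)) x :=
      Real.hasDerivAt_rpow_const (Or.inr hp1)
    have h3 : HasDerivAt (fun x : ℝ => p * x ^ (p - 1)) (p * ((p - 1) * x ^ (p - 1 - 1))) x :=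
      (Real.hasDerivAt_rpow_const (Or.inr hq1)).const_mul p
    exact (h1.sub h2).sub h3
  have hmono : MonotoneOn (fun x => (1 + x) ^ p - x ^ p - p * x ^ (p - 1)) (Set.Ici (1:ℝ)) := by
    refine mono_aux hder (convex_Ici 1) ?_
    intro x hx
    have hx1 : (1:ℝ) ≤ x := hx
    have ht' := tangent_up hx1 hq1
    nlinarith [mul_le_mul_of_nonneg_left ht' hp0]
  have key := hmono (Set.self_mem_Ici) (ht : t ∈ Set.Ici (1:ℝ)) ht
  have h2p : 2 + p ≤ (2:ℝ) ^ p := by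
    have hb : 1 + (p - 1) * 1 ≤ (1 + 1) ^ (p - 1) :=
      one_add_mul_self_le_rpow_one_add (by norm_num) hq1
    have he : (2:ℝ) ^ p = 2 * 2 ^ (p - 1) := by
      rw [← Real.rpow_one_add' (by norm_num) (by linarith : 1 + (p-1) ≠ 0)]
      norm_num
    have hb' : p ≤ (2:ℝ) ^ (p - 1) := by norm_num at hb; linarith
    rw [he]; linarith
  simp only [Real.one_rpow, Real.rpow_one] at key
  norm_num at key
  linarith

private lemma caseC {p s : ℝ} (hp : 2 ≤ p) (hs0 : 0 ≤ s) (hs1 : s ≤ 1) :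
    1 + s ^ p ≤ (1 - s) ^ p + p * s := by
  have hp1 : (1:ℝ) ≤ p := by linarith
  have hq1 : (1:ℝ) ≤ p - 1 := by linarith
  have hp0 : (0:ℝ) ≤ p := by linarith
  have hder : ∀ x : ℝ, HasDerivAt (fun x => (1 - x) ^ p + p * x - x ^ p)
      (-1 * p * (1 - x) ^ (p - 1) + p - p * x ^ (p - 1)) x := by
    intro x
    have h1 : HasDerivAt (fun x : ℝ => (1 - x) ^ p) (-1 * p * (1 - x) ^ (p - 1)) x :=
      ((hasDerivAt_id x).const_sub 1).rpow_const (Or.inr hp1)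
    have h2 : HasDerivAt (fun x : ℝ => x ^ p) (p * x ^ (p - 1)) x :=
      Real.hasDerivAt_rpow_const (Or.inr hp1)
    have h3 : HasDerivAt (fun x : ℝ => p * x) p x := by
      simpa using (hasDerivAt_id x).const_mul p
    exact (h1.add h3).sub h2
  have hmono : MonotoneOn (fun x => (1 - x) ^ p + p * x - x ^ p) (Set.Icc (0:ℝ) 1) := by
    refine mono_aux hder (convex_Icc 0 1) ?_
    intro x hx
    have h1 : (1 - x) ^ (p - 1) ≤ 1 - x := rpow_le_self' (by linarith [hx.2]) (by linarith [hx.1]) hq1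
    have h2 : x ^ (p - 1) ≤ x := rpow_le_self' hx.1 hx.2 hq1
    nlinarith [mul_le_mul_of_nonneg_left h1 hp0, mul_le_mul_of_nonneg_left h2 hp0]
  have key := hmono (Set.left_mem_Icc.2 zero_le_one) (⟨hs0, hs1⟩ : s ∈ Set.Icc (0:ℝ) 1) hs0
  simp only [sub_zero, mul_zero, Real.one_rpow, add_zero,
    Real.zero_rpow (by linarith : p ≠ 0)] at key
  linarith

private lemma caseD {p s : ℝ} (hp : 2 ≤ p) (hs : 1 ≤ s) :
    1 + s ^ p ≤ (s - 1) ^ p + p * s ^ (p - 1) := by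
  have hp1 : (1:ℝ) ≤ p := by linarith
  have hq1 : (1:ℝ) ≤ p - 1 := by linarith
  have hp0 : (0:ℝ) ≤ p := by linarith
  have hder : ∀ x : ℝ, HasDerivAt (fun x => (x - 1) ^ p + p * x ^ (p - 1) - x ^ p)
      (1 * p * (x - 1) ^ (p - 1) + p * ((p - 1) * x ^ (p - 1 - 1)) - p * x ^ (p - 1)) x := by
    intro x
    have h1 : HasDerivAt (fun x : ℝ => (x - 1) ^ p) (1 * p * (x - 1) ^ (p - 1)) x :=
      ((hasDerivAt_id x).sub_const 1).rpow_const (Or.inr hp1)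
    have h2 : HasDerivAt (fun x : ℝ => x ^ p) (p * x ^ (p - 1)) x :=
      Real.hasDerivAt_rpow_const (Or.inr hp1)
    have h3 : HasDerivAt (fun x : ℝ => p * x ^ (p - 1)) (p * ((p - 1) * x ^ (p - 1 - 1))) x :=
      (Real.hasDerivAt_rpow_const (Or.inr hq1)).const_mul p
    exact (h1.add h3).sub h2
  have hmono : MonotoneOn (fun x => (x - 1) ^ p + p * x ^ (p - 1) - x ^ p) (Set.Ici (1:ℝ)) := by
    refine mono_aux hder (convex_Ici 1) ?_
    intro x hx
    have hx1 : (1:ℝ) ≤ x := hx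
    have ht' := tangent_down hx1 hq1
    nlinarith [mul_le_mul_of_nonneg_left ht' hp0]
  have key := hmono (Set.self_mem_Ici) (hs : s ∈ Set.Ici (1:ℝ)) hs
  simp only [sub_self, Real.one_rpow, Real.rpow_one,
    Real.zero_rpow (by linarith : p ≠ 0)] at key
  linarith

theorem stmt15 (p : ℝ) (hp : 2 ≤ p) (t : ℝ) :
    |1 + t| ^ p - 1 - |t| ^ p ≥
      if |t| ≤ 1 then p * t else p * (Real.sign t * |t| ^ (p - 1)) := by
  rw [ge_iff_le]
  split_ifs with h
  · rcases le_or_gt 0 t with ht | ht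
    · rw [abs_of_nonneg ht, abs_of_nonneg (by linarith : (0:ℝ) ≤ 1 + t)]
      have := caseA hp ht
      linarith
    · rw [abs_of_neg ht] at h ⊢
      have h1t : (0:ℝ) ≤ 1 + t := by linarith
      rw [abs_of_nonneg h1t]
      have := caseC hp (by linarith : (0:ℝ) ≤ -t) h
      have e : 1 - -t = 1 + t := by ring
      rw [e] at this
      linarith
  · push_neg at h
    rcases lt_or_ge 0 t with ht | ht
    · have ht1 : 1 < t := by rwa [abs_of_pos ht] at h
      rw [Real.sign_of_pos ht, abs_of_pos ht, abs_of_nonneg (by linarith : (0:ℝ) ≤ 1 + t), one_mul]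
      have := caseB hp ht1.le
      linarith
    · have ht' : t < 0 := by
        rcases lt_or_eq_of_le ht with h' | h'
        · exact h'
        · exfalso; rw [h'] at h; norm_num at h
      rw [abs_of_neg ht'] at h ⊢
      rw [Real.sign_of_neg ht']
      have h1t : 1 + t < 0 := by linarith
      rw [abs_of_neg h1t]
      have := caseD hp h.le
      have e : -t - 1 = -(1 + t) := by ring
      rw [e] at this
      have e2 : p * (-1 * (-t) ^ (p - 1)) = -(p * (-t) ^ (p - 1)) := by ring
      rw [e2]
      linarith
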